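/- Let d ≥ 1, let A be a real orthogonal d×d matrix, and let R : ℝ → (d×d real matrices) be continuous on [0, 2π] with R(t) symmetric for every t ∈ [0, 2π]. Suppose X : ℝ → ℝ^d is twice continuously differentiable with X(2π) = A·X(0), and suppose that for every continuously differentiable Y : ℝ → ℝ^d with Y(2π) = A·Y(0) one has ∫₀^{2π} ( ⟨X'(t), Y'(t)⟩ − ⟨R(t)·X(t), Y(t)⟩ ) dt = 0. Then X''(t) + R(t)·X(t) = 0 for all t ∈ [0, 2π], and moreover X'(2π) = A·X'(0). -/

import Mathlib

open Matrix Real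

private lemma hasDerivAt_dotP {d : ℕ} {u v : ℝ → Fin d → ℝ} {u' v' : Fin d → ℝ} {t : ℝ}
    (hu : HasDerivAt u u' t) (hv : HasDerivAt v v' t) :
    HasDerivAt (fun s => u s ⬝ᵥ v s) (u' ⬝ᵥ v t + u t ⬝ᵥ v') t := by
  have h := HasDerivAt.fun_sum (u := Finset.univ)
    (fun i (_ : i ∈ Finset.univ) => ((hasDerivAt_pi.mp hu i).mul (hasDerivAt_pi.mp hv i)))
  simpa [dotProduct, Finset.sum_add_distrib] using h

private lemma cont_dotP {d : ℕ} {u v : ℝ → Fin d → ℝ} {s : Set ℝ}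
    (hu : ContinuousOn u s) (hv : ContinuousOn v s) :
    ContinuousOn (fun t => u t ⬝ᵥ v t) s := by
  simp only [dotProduct]
  exact continuousOn_finset_sum _ fun i _ =>
    (((continuous_apply i).comp_continuousOn hu).mul ((continuous_apply i).comp_continuousOn hv))

private lemma fund_aux (g : ℝ → ℝ) (hg : ContinuousOn g (Set.Icc 0 (2*π)))
    (h : ∀ ψ : ℝ → ℝ, ContDiff ℝ 1 ψ → ψ 0 = 0 → ψ (2*π) = 0 →
      ∫ t in (0:ℝ)..(2*π), ψ t * g t = 0)
    (t₀ : ℝ) (ht₀ : t₀ ∈ Set.Icc (0:ℝ) (2*π)) : ¬ 0 < g t₀ := by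
  intro hpos
  have hc₀pos : 0 < g t₀ / 2 := by positivity
  set c₀ := g t₀ / 2 with hc₀
  obtain ⟨δ, hδ, hδ'⟩ := Metric.continuousWithinAt_iff.mp (hg t₀ ht₀) c₀ hc₀pos
  have hglb : ∀ t ∈ Set.Icc (0:ℝ) (2*π), dist t t₀ < δ → c₀ ≤ g t := by
    intro t ht hd
    have h1 := hδ' ht hd
    rw [Real.dist_eq] at h1
    have h2 := (abs_lt.mp h1).1
    rw [hc₀] at h2 ⊢; linarith
  set ε := min δ π with hε
  have hεδ : ε ≤ δ := min_le_left _ _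
  have hεpos : 0 < ε := lt_min hδ pi_pos
  set a := max 0 (t₀ - ε) with ha
  set b := min (2*π) (t₀ + ε) with hb
  have hab : a < b := by
    apply max_lt <;> apply lt_min
    · linarith [pi_pos]
    · linarith [ht₀.1]
    · linarith [ht₀.2]
    · linarith
  have ha0 : 0 ≤ a := le_max_left _ _
  have hb2 : b ≤ 2*π := min_le_left _ _
  have hsub : ∀ t, a < t → t < b → t ∈ Set.Icc (0:ℝ) (2*π) ∧ dist t t₀ < δ := by
    intro t h1 h2
    have ha' : t₀ - ε ≤ a := le_max_right _ _
    have hb' : b ≤ t₀ + ε := min_le_right _ _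
    refine ⟨⟨by linarith, by linarith⟩, ?_⟩
    rw [Real.dist_eq, abs_lt]
    constructor <;> linarith
  set c := (a+b)/2 with hc
  set F : ContDiffBump c := ⟨(b-a)/4, (b-a)/2, by linarith, by linarith⟩ with hF
  have hsupp : Function.support (F : ℝ → ℝ) = Set.Ioo a b := by
    rw [F.support_eq, Real.ball_eq_Ioo]
    congr 1 <;> simp [hF, hc] <;> ring
  have hmemg : ∀ t, (F : ℝ → ℝ) t ≠ 0 → c₀ ≤ g t := by
    intro t hne
    have : t ∈ Set.Ioo a b := hsupp ▸ Function.mem_support.mpr hne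
    exact hglb t (hsub t this.1 this.2).1 (hsub t this.1 this.2).2
  have hnn : ∀ t, 0 ≤ (F : ℝ → ℝ) t * g t := by
    intro t
    by_cases hne : (F : ℝ → ℝ) t = 0
    · simp [hne]
    · exact mul_nonneg F.nonneg (le_trans hc₀pos.le (hmemg t hne))
  have hψ0 : (F : ℝ → ℝ) 0 = 0 := by
    by_contra hne
    have : (0:ℝ) ∈ Set.Ioo a b := hsupp ▸ Function.mem_support.mpr hne
    linarith [this.1]
  have hψ2 : (F : ℝ → ℝ) (2*π) = 0 := by
    by_contra hne
    have : (2*π) ∈ Set.Ioo a b := hsupp ▸ Function.mem_support.mpr hne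
    linarith [this.2]
  have hcont : Continuous (F : ℝ → ℝ) := F.continuous
  have hint := h F (by exact_mod_cast F.contDiff (n := 1)) hψ0 hψ2
  set p := c - (b-a)/4 with hp
  set q := c + (b-a)/4 with hq
  have h0p : 0 ≤ p := by rw [hp, hc]; linarith
  have hpq : p ≤ q := by rw [hp, hq]; linarith
  have hq2 : q ≤ 2*π := by rw [hq, hc]; linarith
  have hgi : IntervalIntegrable (fun t => (F : ℝ → ℝ) t * g t) MeasureTheory.volume 0 (2*π) :=
    (hcont.continuousOn.mul hg).intervalIntegrable_of_Icc (by linarith [pi_pos])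
  have hsubint : ∀ x y : ℝ, 0 ≤ x → x ≤ y → y ≤ 2*π →
      IntervalIntegrable (fun t => (F : ℝ → ℝ) t * g t) MeasureTheory.volume x y := by
    intro x y h1 h2 h3
    apply hgi.mono_set
    rw [Set.uIcc_of_le h2, Set.uIcc_of_le (by linarith [pi_pos])]
    exact Set.Icc_subset_Icc h1 h3
  have i1 := hsubint 0 p (le_refl 0) h0p (by linarith)
  have i2 := hsubint p q h0p hpq hq2
  have i3 := hsubint q (2*π) (by linarith) hq2 (le_refl _)
  have e1 : (∫ t in (0:ℝ)..p, (F : ℝ → ℝ) t * g t) + ∫ t in p..(2*π), (F : ℝ → ℝ) t * g t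
      = ∫ t in (0:ℝ)..(2*π), (F : ℝ → ℝ) t * g t :=
    intervalIntegral.integral_add_adjacent_intervals i1 (i2.trans i3)
  have e2 : (∫ t in p..q, (F : ℝ → ℝ) t * g t) + ∫ t in q..(2*π), (F : ℝ → ℝ) t * g t
      = ∫ t in p..(2*π), (F : ℝ → ℝ) t * g t :=
    intervalIntegral.integral_add_adjacent_intervals i2 i3
  have n1 : 0 ≤ ∫ t in (0:ℝ)..p, (F : ℝ → ℝ) t * g t :=
    intervalIntegral.integral_nonneg h0p (fun u _ => hnn u)
  have n3 : 0 ≤ ∫ t in q..(2*π), (F : ℝ → ℝ) t * g t :=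
    intervalIntegral.integral_nonneg hq2 (fun u _ => hnn u)
  have n2 : c₀ * (q - p) ≤ ∫ t in p..q, (F : ℝ → ℝ) t * g t := by
    have hmid : ∀ x ∈ Set.Icc p q, c₀ ≤ (F : ℝ → ℝ) x * g x := by
      intro x hx
      have hcb : x ∈ Metric.closedBall c ((b-a)/4) := by
        rw [Metric.mem_closedBall, Real.dist_eq, abs_le, hc]
        rw [Set.mem_Icc, hp, hq, hc] at hx
        constructor <;> linarith [hx.1, hx.2]
      have h1 : (F : ℝ → ℝ) x = 1 := F.one_of_mem_closedBall hcb
      have hx' : x ∈ Set.Ioo a b := by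
        rw [Metric.mem_closedBall, Real.dist_eq, abs_le, hc] at hcb
        constructor <;> linarith [hcb.1, hcb.2, hab]
      have := hglb x (hsub x hx'.1 hx'.2).1 (hsub x hx'.1 hx'.2).2
      rw [h1, one_mul]; exact this
    have := intervalIntegral.integral_mono_on hpq
      (intervalIntegrable_const (c := c₀)) i2 (fun x hx => hmid x hx)
    rwa [intervalIntegral.integral_const, smul_eq_mul, mul_comm] at this
  have hqp : 0 < q - p := by rw [hp, hq]; linarith
  nlinarith [mul_pos hc₀pos hqp]

private lemma fund (g : ℝ → ℝ) (hg : ContinuousOn g (Set.Icc 0 (2*π)))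
    (h : ∀ ψ : ℝ → ℝ, ContDiff ℝ 1 ψ → ψ 0 = 0 → ψ (2*π) = 0 →
      ∫ t in (0:ℝ)..(2*π), ψ t * g t = 0) :
    ∀ t ∈ Set.Icc (0:ℝ) (2*π), g t = 0 := by
  intro t ht
  have h1 := fund_aux g hg h t ht
  have h2 := fund_aux (fun s => -g s) hg.neg (fun ψ hψ h0 h2 => by
    have := h ψ hψ h0 h2
    simp only [mul_neg]
    rw [intervalIntegral.integral_neg, this, neg_zero]) t ht
  simp only [not_lt] at h1 h2
  linarith

theorem kernel_of_index_form_is_periodic_jacobi_field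
    (d : ℕ) (hd : 1 ≤ d)
    (A : Matrix (Fin d) (Fin d) ℝ) (hA : Aᵀ * A = 1)
    (R : ℝ → Matrix (Fin d) (Fin d) ℝ)
    (hRcont : ContinuousOn R (Set.Icc 0 (2 * π)))
    (hRsymm : ∀ t ∈ Set.Icc (0 : ℝ) (2 * π), (R t)ᵀ = R t)
    (X : ℝ → (Fin d → ℝ))
    (hX : ContDiff ℝ 2 X)
    (hX0 : X (2 * π) = A.mulVec (X 0))
    (hker : ∀ Y : ℝ → (Fin d → ℝ), ContDiff ℝ 1 Y → Y (2 * π) = A.mulVec (Y 0) →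
      ∫ t in (0 : ℝ)..(2 * π),
        (deriv X t ⬝ᵥ deriv Y t - (R t).mulVec (X t) ⬝ᵥ Y t) = 0) :
    (∀ t ∈ Set.Icc (0 : ℝ) (2 * π),
      deriv (deriv X) t + (R t).mulVec (X t) = 0) ∧
    deriv X (2 * π) = A.mulVec (deriv X 0) := by
  have h2π : (0:ℝ) ≤ 2 * π := by positivity
  have hXd : ContDiff ℝ 1 (deriv X) := by
    have h := (contDiff_succ_iff_deriv.mp (show ContDiff ℝ ((1:WithTop ℕ∞)+1) X by
      norm_num; exact hX)).2.2
    exact h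
  have hX'' : ∀ t, HasDerivAt (deriv X) (deriv (deriv X) t) t :=
    fun t => ((hXd.differentiable one_ne_zero) t).hasDerivAt
  have hcX' : Continuous (deriv X) := hXd.continuous
  have hcX'' : Continuous (deriv (deriv X)) := hXd.continuous_deriv le_rfl
  have hRX : ContinuousOn (fun t => (R t).mulVec (X t)) (Set.Icc 0 (2*π)) := by
    apply continuousOn_pi.mpr
    intro i
    simp only [Matrix.mulVec, dotProduct]
    apply continuousOn_finset_sum
    intro j _
    exact (((continuous_apply j).comp (continuous_apply i)).comp_continuousOn hRcont).mul
      ((continuous_apply j).comp hX.continuous).continuousOn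
  have hfc : ContinuousOn (fun t => deriv (deriv X) t + (R t).mulVec (X t)) (Set.Icc 0 (2*π)) :=
    hcX''.continuousOn.add hRX
  -- key integration by parts identity
  have key : ∀ Y : ℝ → Fin d → ℝ, ContDiff ℝ 1 Y → Y (2*π) = A.mulVec (Y 0) →
      (∫ t in (0:ℝ)..(2*π), (deriv (deriv X) t + (R t).mulVec (X t)) ⬝ᵥ Y t)
        = deriv X (2*π) ⬝ᵥ Y (2*π) - deriv X 0 ⬝ᵥ Y 0 := by
    intro Y hY hYb
    have hY' : ∀ t, HasDerivAt Y (deriv Y t) t :=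
      fun t => ((hY.differentiable one_ne_zero) t).hasDerivAt
    have hcY : Continuous Y := hY.continuous
    have hcY' : Continuous (deriv Y) := hY.continuous_deriv le_rfl
    have i1 : IntervalIntegrable (fun t => deriv (deriv X) t ⬝ᵥ Y t)
        MeasureTheory.volume 0 (2*π) :=
      (cont_dotP hcX''.continuousOn hcY.continuousOn).intervalIntegrable_of_Icc h2π
    have i2 : IntervalIntegrable (fun t => deriv X t ⬝ᵥ deriv Y t)
        MeasureTheory.volume 0 (2*π) :=
      (cont_dotP hcX'.continuousOn hcY'.continuousOn).intervalIntegrable_of_Icc h2π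
    have i3 : IntervalIntegrable (fun t => (R t).mulVec (X t) ⬝ᵥ Y t)
        MeasureTheory.volume 0 (2*π) :=
      (cont_dotP hRX hcY.continuousOn).intervalIntegrable_of_Icc h2π
    have hsum : (∫ t in (0:ℝ)..(2*π),
        (deriv (deriv X) t ⬝ᵥ Y t + deriv X t ⬝ᵥ deriv Y t))
          = deriv X (2*π) ⬝ᵥ Y (2*π) - deriv X 0 ⬝ᵥ Y 0 :=
      intervalIntegral.integral_eq_sub_of_hasDerivAt
        (fun t _ => hasDerivAt_dotP (hX'' t) (hY' t)) (i1.add i2)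
    have hk := hker Y hY hYb
    rw [intervalIntegral.integral_sub i2 i3] at hk
    rw [intervalIntegral.integral_add i1 i2] at hsum
    have heq : (fun t => (deriv (deriv X) t + (R t).mulVec (X t)) ⬝ᵥ Y t)
        = fun t => deriv (deriv X) t ⬝ᵥ Y t + (R t).mulVec (X t) ⬝ᵥ Y t :=
      funext fun t => add_dotProduct _ _ _
    rw [heq, intervalIntegral.integral_add i1 i3]
    linarith
  -- part 1
  have part1 : ∀ t ∈ Set.Icc (0:ℝ) (2*π),
      deriv (deriv X) t + (R t).mulVec (X t) = 0 := by
    have hcomp : ∀ v : Fin d → ℝ, ∀ t ∈ Set.Icc (0:ℝ) (2*π),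
        (deriv (deriv X) t + (R t).mulVec (X t)) ⬝ᵥ v = 0 := by
      intro v
      apply fund
      · exact cont_dotP hfc continuousOn_const
      · intro ψ hψ h0 h2
        have hYc : ContDiff ℝ 1 (fun t => ψ t • v) := hψ.smul contDiff_const
        have hYb : (fun t => ψ t • v) (2*π) = A.mulVec ((fun t => ψ t • v) 0) := by
          simp [h0, h2]
        have hk := key _ hYc hYb
        simp only [h0, h2, zero_smul, dotProduct_zero, sub_zero] at hk
        simpa [dotProduct_smul, smul_eq_mul] using hk
    intro t ht
    funext i
    have h := hcomp (Pi.single i 1) t ht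
    rw [dotProduct_single, mul_one] at h
    simpa using h
  refine ⟨part1, ?_⟩
  -- part 2
  have hbdry : ∀ v : Fin d → ℝ, deriv X (2*π) ⬝ᵥ A.mulVec v = deriv X 0 ⬝ᵥ v := by
    intro v
    have h2πne : (2*π : ℝ) ≠ 0 := by positivity
    have hYc : ContDiff ℝ 1 (fun t : ℝ => v + (t / (2*π)) • (A.mulVec v - v)) :=
      contDiff_const.add ((contDiff_id.div_const _).smul contDiff_const)
    have e0 : v + ((0:ℝ) / (2*π)) • (A.mulVec v - v) = v := by simp
    have e2 : v + ((2*π) / (2*π)) • (A.mulVec v - v) = A.mulVec v := by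
      rw [div_self h2πne, one_smul]; abel
    have hYb : (fun t : ℝ => v + (t / (2*π)) • (A.mulVec v - v)) (2*π)
        = A.mulVec ((fun t : ℝ => v + (t / (2*π)) • (A.mulVec v - v)) 0) := by
      simp only [e0, e2]
    have hk := key _ hYc hYb
    have hzero : (∫ t in (0:ℝ)..(2*π),
        (deriv (deriv X) t + (R t).mulVec (X t)) ⬝ᵥ
          (v + (t / (2*π)) • (A.mulVec v - v))) = 0 := by
      have heq : Set.EqOn
          (fun t => (deriv (deriv X) t + (R t).mulVec (X t)) ⬝ᵥ
            (v + (t / (2*π)) • (A.mulVec v - v)))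
          (fun _ => (0:ℝ)) (Set.uIcc 0 (2*π)) := by
        intro t ht
        rw [Set.uIcc_of_le h2π] at ht
        simp [part1 t ht]
      rw [intervalIntegral.integral_congr heq]
      simp
    rw [hzero] at hk
    simp only [e0, e2] at hk
    linarith
  have hvm : ∀ v : Fin d → ℝ, (Aᵀ.mulVec (deriv X (2*π))) ⬝ᵥ v = deriv X 0 ⬝ᵥ v := by
    intro v
    rw [← hbdry v, dotProduct_mulVec]
    congr 1
    rw [← Matrix.transpose_transpose A, Matrix.vecMul_transpose, Matrix.transpose_transpose]
  have hv : Aᵀ.mulVec (deriv X (2*π)) = deriv X 0 := by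
    funext i
    have h := hvm (Pi.single i 1)
    rwa [dotProduct_single, dotProduct_single, mul_one, mul_one] at h
  rw [← hv, Matrix.mulVec_mulVec, mul_eq_one_comm.mp hA, Matrix.one_mulVec]
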